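/- Let n ≥ 1 and W ∈ ℝⁿ. For every α ∈ ℝ and every sign vector s ∈ {−1, +1}ⁿ, the XNOR-style symmetric binarization error satisfies ‖W − α·s‖² ≥ ‖W‖² − (∑_{i=1}^n |W_i|)²/n, with equality when s_i = sign(W_i) (s_i arbitrary in {−1,+1} when W_i = 0) and α = (∑_i |W_i|)/n. -/
import Mathlib

lemma xnor_expand (n : ℕ) (W s : Fin n → ℝ) (hs : ∀ i, s i = 1 ∨ s i = -1) (α : ℝ) :
    ∑ i, (W i - α * s i) ^ 2
      = ∑ i, (W i) ^ 2 - 2 * α * ∑ i, W i * s i + α ^ 2 * n := by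
  have hs2 : ∀ i, (s i) ^ 2 = 1 := by
    intro i; rcases hs i with h | h <;> rw [h] <;> norm_num
  have h1 : ∀ i ∈ Finset.univ, (W i - α * s i) ^ 2
      = (W i) ^ 2 - 2 * α * (W i * s i) + α ^ 2 * (s i) ^ 2 := by
    intro i _; ring
  rw [Finset.sum_congr rfl h1]
  rw [Finset.sum_add_distrib, Finset.sum_sub_distrib, ← Finset.mul_sum, ← Finset.mul_sum]
  simp [hs2]

/-- For every `α ∈ ℝ` and sign vector `s ∈ {−1,+1}ⁿ`, the XNOR-style
symmetric binarization error satisfies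
`‖W − α·s‖² ≥ ‖W‖² − (∑_i |W_i|)²/n`, with equality when `s_i = sign(W_i)`
(arbitrary in `{−1,+1}` when `W_i = 0`) and `α = (∑_i |W_i|)/n`. -/
theorem xnor_binarization_error_bound (n : ℕ) (hn : 1 ≤ n) (W : Fin n → ℝ) :
    (∀ (α : ℝ) (s : Fin n → ℝ), (∀ i, s i = 1 ∨ s i = -1) →
      ∑ i, (W i) ^ 2 - (∑ i, |W i|) ^ 2 / (n : ℝ)
        ≤ ∑ i, (W i - α * s i) ^ 2)
    ∧ ∀ s : Fin n → ℝ, (∀ i, s i = 1 ∨ s i = -1) →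
        (∀ i, W i ≠ 0 → s i = Real.sign (W i)) →
        ∑ i, (W i - ((∑ j, |W j|) / (n : ℝ)) * s i) ^ 2
          = ∑ i, (W i) ^ 2 - (∑ i, |W i|) ^ 2 / (n : ℝ) := by
  have hn' : (1 : ℝ) ≤ (n : ℝ) := by exact_mod_cast hn
  have hn0 : (0 : ℝ) < (n : ℝ) := by linarith
  constructor
  · intro α s hs
    rw [xnor_expand n W s hs α]
    set c := ∑ i, W i * s i with hc
    set A := ∑ i, |W i| with hA
    have hcA : |c| ≤ A := by
      calc |c| ≤ ∑ i, |W i * s i| := Finset.abs_sum_le_sum_abs _ _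
        _ = A := by
          refine Finset.sum_congr rfl fun i _ => ?_
          rcases hs i with h | h <;> rw [h] <;> simp
    have h1 : c ≤ A := le_of_abs_le hcA
    have h2 : -A ≤ c := neg_le_of_abs_le hcA
    have h3 : A ^ 2 / (n : ℝ) * (n : ℝ) = A ^ 2 := div_mul_cancel₀ _ (ne_of_gt hn0)
    nlinarith [sq_nonneg (α * (n : ℝ) - c), mul_nonneg (sub_nonneg.2 h1) (by linarith : (0:ℝ) ≤ A + c)]
  · intro s hs hsgn
    have hWs : ∀ i, W i * s i = |W i| := by
      intro i
      by_cases h : W i = 0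
      · simp [h]
      · rw [hsgn i h, Real.sign]
        rcases lt_trichotomy (W i) 0 with hlt | heq | hgt
        · rw [if_pos hlt, abs_of_neg hlt]; ring
        · exact absurd heq h
        · rw [if_neg (not_lt.2 hgt.le), if_pos hgt, abs_of_pos hgt]; ring
    rw [xnor_expand n W s hs]
    rw [Finset.sum_congr rfl (fun i _ => hWs i)]
    field_simp
    ring
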